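/- Let m ≥ 2 and n ≥ 1 be integers. Let A = {e₁, …, eₙ} ⊂ ℝⁿ be the set of standard basis vectors, and let B ⊂ ℝⁿ be the set of m^n centres of the m^n non-overlapping closed subcubes of side length 2/m that partition [−1,1]ⁿ (i.e., B = { ((2k₁+1−m)/m, …, (2kₙ+1−m)/m) : kᵢ ∈ {0,…,m−1} }). Let h(a,b) be the Euclidean inner product on ℝⁿ, and define the semimetrics d_A(a,a') := sup_{b∈B}|h(a,b) − h(a',b)| on A and d_B(b,b') := sup_{a∈A}|h(a,b) − h(a,b')| on B. Set ε = 1/(3m²) and δ = 1/m − 1/(2m²), and C := sup_{a∈A, b∈B}|h(a,b)|. Then N_A(ε) = n, C = 1 − 1/m, and N_B^Δ(ε + δ) = m^n = (⌈C/δ⌉)^{N_A(ε)}; in particular equality holds in the bound N_B^Δ(ε+δ) ≤ (⌈C/δ⌉)^{N_A(ε)}. -/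

import Mathlib

/-- The intrinsic covering number `N_S(ε)` of a subset `S` of a semimetric space
`(E, d)`: the least cardinality of a finite set `F ⊆ S` such that every point of `S`
is within distance `ε` of some point of `F`; `∞` if no such finite set exists. -/
noncomputable def icov {E : Type*} (d : E → E → ℝ) (S : Set E) (ε : ℝ) : ℕ∞ :=
  sInf ((fun F : Finset E => (F.card : ℕ∞)) ''
    {F : Finset E | ↑F ⊆ S ∧ ∀ x ∈ S, ∃ y ∈ F, d x y ≤ ε})

/-- The diameter covering number `N_S^Δ(ε)`: the least number of subsets of `S`, each of
diameter at most `2ε`, needed to cover `S`; `∞` if no finite such cover exists. -/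
noncomputable def dcovIn {E : Type*} (d : E → E → ℝ) (S : Set E) (ε : ℝ) : ℕ∞ :=
  sInf ((fun k : ℕ => (k : ℕ∞)) ''
    {k : ℕ | ∃ G : Fin k → Set E, (∀ i, G i ⊆ S) ∧
      (∀ i, ∀ x ∈ G i, ∀ y ∈ G i, d x y ≤ 2 * ε) ∧ S ⊆ ⋃ i, G i})

/-- Let `m ≥ 2`, `n ≥ 1`.  Let `A ⊂ ℝⁿ` be the set of standard basis
vectors `e₁, …, eₙ`, and `B ⊂ ℝⁿ` the set of the `mⁿ` centres
`((2k₁+1−m)/m, …, (2kₙ+1−m)/m)`, `kᵢ ∈ {0,…,m−1}`, of the subcubes of side `2/m`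
partitioning `[−1,1]ⁿ`.  Let `h` be the Euclidean inner product, with associated
semimetrics `d_A` on `A` and `d_B` on `B`; set `ε = 1/(3m²)`, `δ = 1/m − 1/(2m²)` and
`C := sup_{a∈A,b∈B} |h(a,b)|`.  Then `N_A(ε) = n`, `C = 1 − 1/m`, and
`N_B^Δ(ε+δ) = mⁿ = (⌈C/δ⌉)^(N_A(ε))`; in particular equality holds in the bound
`N_B^Δ(ε+δ) ≤ (⌈C/δ⌉)^(N_A(ε))`. -/
theorem statement19 (m n : ℕ) (hm : 2 ≤ m) (hn : 1 ≤ n)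
    (Aset : Set (Fin n → ℝ))
    (hAset : Aset = Set.range fun j : Fin n => (Pi.single j 1 : Fin n → ℝ))
    (Bset : Set (Fin n → ℝ))
    (hBset : Bset = Set.range fun k : Fin n → Fin m =>
      fun i : Fin n => (2 * (k i : ℝ) + 1 - m) / m)
    (h : (Fin n → ℝ) → (Fin n → ℝ) → ℝ)
    (hh : ∀ a b : Fin n → ℝ, h a b = ∑ i, a i * b i)
    (dA : (Fin n → ℝ) → (Fin n → ℝ) → ℝ)
    (hdA : ∀ a ∈ Aset, ∀ a' ∈ Aset, dA a a' = ⨆ b : Bset, |h a b - h a' b|)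
    (dB : (Fin n → ℝ) → (Fin n → ℝ) → ℝ)
    (hdB : ∀ b ∈ Bset, ∀ b' ∈ Bset, dB b b' = ⨆ a : Aset, |h a b - h a b'|)
    (ε δ C : ℝ)
    (hε : ε = 1 / (3 * m ^ 2)) (hδ : δ = 1 / m - 1 / (2 * m ^ 2))
    (hC : C = ⨆ p : Aset × Bset, |h p.1 p.2|) :
    icov dA Aset ε = (n : ℕ∞) ∧
    C = 1 - 1 / m ∧
    dcovIn dB Bset (ε + δ) = (m : ℕ∞) ^ n ∧
    ((⌈C / δ⌉₊ : ℕ∞)) ^ n = (m : ℕ∞) ^ n := by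
  -- numeric basics
  have hMpos : (0:ℝ) < (m:ℝ) := by exact_mod_cast lt_of_lt_of_le Nat.zero_lt_two hm
  have hM2 : (2:ℝ) ≤ (m:ℝ) := by exact_mod_cast hm
  have hne0 : (m:ℝ) ≠ 0 := ne_of_gt hMpos
  have hεpos : (0:ℝ) < ε := by rw [hε]; positivity
  have hδpos : (0:ℝ) < δ := by
    rw [hδ, sub_pos, div_lt_div_iff₀ (by positivity) hMpos]
    nlinarith
  have hε1 : ε < 1 := by
    rw [hε, div_lt_one (by positivity)]
    nlinarith
  -- the maps
  set f : Fin n → (Fin n → ℝ) := fun j => (Pi.single j 1 : Fin n → ℝ) with hf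
  set g : (Fin n → Fin m) → (Fin n → ℝ) :=
    fun k => fun i : Fin n => (2 * (k i : ℝ) + 1 - m) / m with hg
  haveI : Nonempty (Fin n) := ⟨⟨0, hn⟩⟩
  haveI : Nonempty (Fin m) := ⟨⟨0, lt_of_lt_of_le Nat.zero_lt_two hm⟩⟩
  have memA : ∀ j : Fin n, f j ∈ Aset := by intro j; rw [hAset]; exact ⟨j, rfl⟩
  have memB : ∀ k : Fin n → Fin m, g k ∈ Bset := by intro k; rw [hBset]; exact ⟨k, rfl⟩
  haveI : Nonempty Aset := ⟨⟨f (Classical.arbitrary _), memA _⟩⟩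
  haveI : Nonempty Bset := ⟨⟨g (Classical.arbitrary _), memB _⟩⟩
  have hEval : ∀ (j : Fin n) (b : Fin n → ℝ), h (f j) b = b j := by
    intro j b; rw [hh]; simp [hf, Pi.single_apply, ite_mul]
  -- coordinate bound
  have hone : (1:ℝ) - 1/m = ((m:ℝ)-1)/m := by field_simp
  have hcoord : ∀ b ∈ Bset, ∀ i, |b i| ≤ 1 - 1/(m:ℝ) := by
    intro b hb i
    rw [hBset] at hb; obtain ⟨k, rfl⟩ := hb
    have hk0 : (0:ℝ) ≤ (k i : ℝ) := Nat.cast_nonneg _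
    have hk1 : (k i : ℝ) ≤ (m:ℝ) - 1 := by
      have h1 : ((k i : ℕ) : ℝ) + 1 ≤ (m:ℝ) := by exact_mod_cast (k i).isLt
      linarith
    rw [hone]
    show |(2 * (k i : ℝ) + 1 - m) / m| ≤ ((m:ℝ)-1)/m
    have habs : |2*(k i:ℝ)+1-(m:ℝ)| ≤ (m:ℝ)-1 := by
      rw [abs_le]; constructor <;> linarith
    rw [abs_div, abs_of_pos hMpos]
    gcongr
  have hcoord1 : ∀ b ∈ Bset, ∀ i, |b i| ≤ 1 := by
    intro b hb i
    have := hcoord b hb i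
    have h2 : (0:ℝ) ≤ 1/(m:ℝ) := by positivity
    linarith
  -- dA facts
  have hinj : Function.Injective f := by
    intro j j' hjj'
    by_contra hne'
    have hcf := congrFun hjj' j
    rw [hf] at hcf
    simp [Pi.single_apply, hne'] at hcf
  have hbddA : ∀ (j j' : Fin n),
      BddAbove (Set.range fun b : Bset => |h (f j) b - h (f j') b|) := by
    intro j j'
    refine ⟨2, ?_⟩
    rintro x ⟨b, rfl⟩
    have c1 := abs_le.1 (hcoord1 b b.2 j)
    have c2 := abs_le.1 (hcoord1 b b.2 j')
    show |h (f j) ↑b - h (f j') ↑b| ≤ 2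
    rw [hEval, hEval, abs_le]
    constructor <;> [linarith; linarith]
  have hdAself : ∀ a ∈ Aset, dA a a = 0 := by
    intro a ha; rw [hdA a ha a ha]; simp
  have hdAgt : ∀ j j' : Fin n, j ≠ j' → (1:ℝ) ≤ dA (f j) (f j') := by
    intro j j' hjj
    rw [hdA _ (memA j) _ (memA j')]
    classical
    set k : Fin n → Fin m := fun i => if i = j then ⟨m-1, Nat.sub_lt (by omega) one_pos⟩
      else ⟨0, by omega⟩ with hk
    have hv1 : ((k j : ℕ) : ℝ) = (m:ℝ) - 1 := by
      simp [hk]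
      have : ((m - 1 : ℕ) : ℝ) = (m:ℝ) - 1 := by
        have : 1 ≤ m := by omega
        push_cast [Nat.cast_sub this]
        ring
      exact this
    have hv2 : ((k j' : ℕ) : ℝ) = 0 := by
      simp [hk, if_neg (Ne.symm hjj)]
    refine le_trans ?_ (le_ciSup (hbddA j j') (⟨g k, memB k⟩ : Bset))
    rw [hEval, hEval]
    show (1:ℝ) ≤ |g k j - g k j'|
    rw [hg]
    simp only
    rw [hv1, hv2]
    have hval : (2 * ((m:ℝ) - 1) + 1 - m) / m - (2 * 0 + 1 - (m:ℝ)) / m = (2*(m:ℝ)-2)/m := by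
      field_simp; ring
    rw [hval, abs_of_nonneg (div_nonneg (by linarith) hMpos.le)]
    rw [le_div_iff₀ hMpos]
    linarith
  -- Part 1
  have part1 : icov dA Aset ε = (n : ℕ∞) := by
    apply le_antisymm
    · -- upper bound
      apply sInf_le
      refine ⟨Finset.image f Finset.univ, ⟨?_, ?_⟩, ?_⟩
      · intro x hx
        simp only [Finset.coe_image, Finset.coe_univ, Set.image_univ] at hx
        rw [hAset]; exact hx
      · intro x hx
        refine ⟨x, ?_, ?_⟩
        · rw [hAset] at hx; obtain ⟨j, rfl⟩ := hx
          exact Finset.mem_image_of_mem f (Finset.mem_univ j)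
        · rw [hdAself x hx]; linarith
      · simp [Finset.card_image_of_injective _ hinj]
    · -- lower bound
      apply le_sInf
      rintro _ ⟨F, ⟨hFsub, hFcov⟩, rfl⟩
      have hsubF : ∀ j : Fin n, f j ∈ F := by
        intro j
        obtain ⟨y, hyF, hdxy⟩ := hFcov (f j) (memA j)
        have hyA : y ∈ Aset := hFsub hyF
        rw [hAset] at hyA; obtain ⟨j', rfl⟩ := hyA
        by_cases hjj : j = j'
        · subst hjj; exact hyF
        · exact absurd hdxy (by push_neg; linarith [hdAgt j j' hjj])
      have : Finset.image f Finset.univ ⊆ F := by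
        intro x hx
        obtain ⟨j, _, rfl⟩ := Finset.mem_image.1 hx
        exact hsubF j
      have hcard := Finset.card_le_card this
      rw [Finset.card_image_of_injective _ hinj, Finset.card_univ, Fintype.card_fin] at hcard
      show (n:ℕ∞) ≤ (F.card : ℕ∞)
      exact_mod_cast hcard
  -- Part 2
  have part2 : C = 1 - 1/(m:ℝ) := by
    rw [hC]
    apply le_antisymm
    · apply ciSup_le
      rintro ⟨⟨a, ha⟩, ⟨b, hb⟩⟩
      show |h a b| ≤ 1 - 1/(m:ℝ)
      rw [hAset] at ha; obtain ⟨j, rfl⟩ := ha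
      rw [hEval]
      exact hcoord b hb j
    · classical
      set k1 : Fin n → Fin m := fun _ => ⟨m-1, Nat.sub_lt (by omega) one_pos⟩ with hk1
      have hj0 : Nonempty (Fin n) := inferInstance
      obtain ⟨j0⟩ := hj0
      have hbdd : BddAbove (Set.range fun p : Aset × Bset => |h p.1 p.2|) := by
        refine ⟨1, ?_⟩
        rintro x ⟨⟨⟨a, ha⟩, ⟨b, hb⟩⟩, rfl⟩
        show |h a b| ≤ 1
        rw [hAset] at ha; obtain ⟨j, rfl⟩ := ha
        rw [hEval]
        exact hcoord1 b hb j
      refine le_trans (le_of_eq ?_) (le_ciSup hbdd (⟨⟨f j0, memA j0⟩, ⟨g k1, memB k1⟩⟩ : Aset × Bset))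
      show (1:ℝ) - 1/m = |h (f j0) (g k1)|
      rw [hEval]
      have hv : g k1 j0 = ((m:ℝ)-1)/m := by
        rw [hg]
        simp only [hk1]
        have hc : ((m - 1 : ℕ) : ℝ) = (m:ℝ) - 1 := by
          have h1 : 1 ≤ m := by omega
          push_cast [Nat.cast_sub h1]; ring
        rw [hc]; field_simp; ring
      rw [hv, abs_of_nonneg (div_nonneg (by linarith) hMpos.le), hone]
  -- dB facts
  have hginj : Function.Injective g := by
    intro k k' hkk
    funext i
    have hci := congrFun hkk i
    rw [hg] at hci
    simp only at hci
    field_simp at hci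
    exact Fin.ext (by exact_mod_cast (by linarith : ((k i : ℕ) : ℝ) = ((k' i : ℕ) : ℝ)))
  have hbddB : ∀ (b b' : Fin n → ℝ), b ∈ Bset → b' ∈ Bset →
      BddAbove (Set.range fun a : Aset => |h a b - h a b'|) := by
    intro b b' hb hb'
    refine ⟨2, ?_⟩
    rintro x ⟨⟨a, ha⟩, rfl⟩
    show |h a b - h a b'| ≤ 2
    rw [hAset] at ha; obtain ⟨j, rfl⟩ := ha
    rw [hEval, hEval]
    have c1 := abs_le.1 (hcoord1 b hb j)
    have c2 := abs_le.1 (hcoord1 b' hb' j)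
    rw [abs_le]; constructor <;> [linarith; linarith]
  have hdBge : ∀ b ∈ Bset, ∀ b' ∈ Bset, ∀ j : Fin n, |b j - b' j| ≤ dB b b' := by
    intro b hb b' hb' j
    rw [hdB b hb b' hb']
    have := le_ciSup (hbddB b b' hb hb') (⟨f j, memA j⟩ : Aset)
    simpa [hEval] using this
  have hdBself : ∀ b ∈ Bset, dB b b = 0 := by
    intro b hb; rw [hdB b hb b hb]; simp
  have hsep : ∀ k k' : Fin n → Fin m, k ≠ k' → 2/(m:ℝ) ≤ dB (g k) (g k') := by
    intro k k' hkk
    obtain ⟨j, hj⟩ := Function.ne_iff.1 hkk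
    refine le_trans ?_ (hdBge _ (memB k) _ (memB k') j)
    have hvne : ((k j : ℕ) : ℤ) ≠ ((k' j : ℕ) : ℤ) := by
      intro hcon
      exact hj (Fin.ext (by exact_mod_cast hcon))
    have h1z : (1:ℤ) ≤ |((k j : ℕ) : ℤ) - ((k' j : ℕ) : ℤ)| :=
      Int.one_le_abs (sub_ne_zero.2 hvne)
    have h1r : (1:ℝ) ≤ |((k j : ℕ) : ℝ) - ((k' j : ℕ) : ℝ)| := by
      exact_mod_cast h1z
    have hdiff : g k j - g k' j = 2*(((k j : ℕ) : ℝ) - ((k' j : ℕ) : ℝ))/m := by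
      rw [hg]; field_simp; ring
    rw [hdiff, abs_div, abs_of_pos hMpos, div_le_div_iff₀ hMpos hMpos]
    rw [abs_mul, abs_two]
    nlinarith
  -- key inequality
  have hlt : 2*(ε+δ) < 2/(m:ℝ) := by
    have hkey : (1:ℝ)/(3*(m:ℝ)^2) < 1/(2*(m:ℝ)^2) := by
      apply div_lt_div_of_pos_left one_pos (by positivity)
      nlinarith
    have hsum : ε + δ < 1/(m:ℝ) := by
      rw [hε, hδ]; linarith
    have h2m : (2:ℝ)/m = 2*(1/m) := (mul_one_div 2 _).symm
    linarith
  have hεδ0 : (0:ℝ) ≤ 2*(ε+δ) := by linarith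
  -- Part 3
  have hcardfun : Fintype.card (Fin n → Fin m) = m ^ n := by simp
  have part3 : dcovIn dB Bset (ε + δ) = ((m ^ n : ℕ) : ℕ∞) := by
    apply le_antisymm
    · apply sInf_le
      refine ⟨m ^ n, ?_, rfl⟩
      set e : (Fin n → Fin m) ≃ Fin (m ^ n) := Fintype.equivFinOfCardEq hcardfun with he
      refine ⟨fun i => {g (e.symm i)}, ?_, ?_, ?_⟩
      · intro i x hx
        rw [Set.mem_singleton_iff] at hx
        rw [hx]; exact memB _
      · intro i x hx y hy
        rw [Set.mem_singleton_iff] at hx hy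
        rw [hx, hy, hdBself _ (memB _)]
        exact hεδ0
      · intro b hb
        have hb' := hb
        rw [hBset] at hb'; obtain ⟨k, rfl⟩ := hb'
        exact Set.mem_iUnion.2 ⟨e k, by simp⟩
    · apply le_sInf
      rintro _ ⟨k, ⟨G, hGsub, hGdiam, hGcov⟩, rfl⟩
      have hchoice : ∀ key : Fin n → Fin m, ∃ i, g key ∈ G i := by
        intro key; exact Set.mem_iUnion.1 (hGcov (memB key))
      choose φ hφ using hchoice
      have hφinj : Function.Injective φ := by
        intro k1 k2 h12
        by_contra hne'
        have hd := hGdiam (φ k1) _ (hφ k1) _ (h12 ▸ hφ k2)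
        have hge := hsep k1 k2 hne'
        linarith
      have := Fintype.card_le_of_injective φ hφinj
      rw [hcardfun, Fintype.card_fin] at this
      show ((m^n : ℕ) : ℕ∞) ≤ ((k : ℕ) : ℕ∞)
      exact_mod_cast this
  -- Part 4
  have h2m1 : (0:ℝ) < 2*(m:ℝ) - 1 := by linarith
  have hδ' : (0:ℝ) < 1/(m:ℝ) - 1/(2*(m:ℝ)^2) := hδ ▸ hδpos
  have hq : C/δ = 2*(m:ℝ)*((m:ℝ)-1)/(2*(m:ℝ)-1) := by
    rw [part2, hδ, div_eq_div_iff hδ'.ne' h2m1.ne']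
    field_simp
  have hceil : ⌈C / δ⌉₊ = m := by
    rw [Nat.ceil_eq_iff (by omega : m ≠ 0)]
    constructor
    · rw [hq]
      have hmm : ((m - 1 : ℕ) : ℝ) = (m:ℝ) - 1 := by
        have h1 : 1 ≤ m := by omega
        push_cast [Nat.cast_sub h1]; ring
      rw [hmm, lt_div_iff₀ h2m1]
      nlinarith
    · rw [hq, div_le_iff₀ h2m1]
      nlinarith
  refine ⟨part1, part2, ?_, ?_⟩
  · rw [part3]; push_cast; ring
  · rw [hceil]
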